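/- For Laurent series in the shift operator with the multiplication rule aT^i · bT^j = a·T^i(b)·T^{i+j}, the residue (the coefficient of T^0) of any commutator [A,B] of two such series lies in the image of the operator T−1. Concretely, for monomials, [aT^j, bT^{-j}] = (T^j − 1)(T^{-j}(a)·b), and T^j − 1 factors through T − 1. -/

import Mathlib

noncomputable def tmul {R : Type*} [CommRing R] (T : R ≃+* R) (A B : ℤ →₀ R) : ℤ →₀ R :=
  A.sum fun i a => B.sum fun j b => Finsupp.single (i + j) (a * (T ^ i) b)

private def shiftSub {R : Type*} [CommRing R] (T : R ≃+* R) : AddSubgroup R where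
  carrier := {x | ∃ c, T c - c = x}
  zero_mem' := ⟨0, by simp⟩
  add_mem' := by rintro a b ⟨c, rfl⟩ ⟨d, rfl⟩; exact ⟨c + d, by rw [map_add]; ring⟩
  neg_mem' := by rintro a ⟨c, rfl⟩; exact ⟨-c, by rw [map_neg]; ring⟩

private lemma shift_pow_mem {R : Type*} [CommRing R] (T : R ≃+* R) :
    ∀ (n : ℤ) (x : R), (T ^ n) x - x ∈ shiftSub T := by
  intro n
  induction n using Int.induction_on with
  | zero =>
      refine fun x => ⟨0, ?_⟩
      have h1 : (T ^ (0 : ℤ)) x = x := rfl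
      rw [h1, map_zero]; ring
  | succ n ih =>
      intro x
      obtain ⟨c, hc⟩ := ih x
      refine ⟨c + (T ^ (n : ℤ)) x, ?_⟩
      have h1 : (T ^ ((n : ℤ) + 1)) x = T ((T ^ (n : ℤ)) x) := by
        rw [add_comm, zpow_add]; rfl
      rw [map_add, h1]
      linear_combination hc
  | pred n ih =>
      intro x
      obtain ⟨c, hc⟩ := ih (T⁻¹ x)
      refine ⟨c - T⁻¹ x, ?_⟩
      have h1 : (T ^ (-(n : ℤ) - 1)) x = (T ^ (-(n : ℤ))) (T⁻¹ x) := by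
        rw [zpow_sub_one]; rfl
      have h2 : T (T⁻¹ x) = x := by
        have h3 : (T * T⁻¹) x = T (T⁻¹ x) := rfl
        rw [← h3, mul_inv_cancel]; rfl
      rw [map_sub, h1, h2]
      linear_combination hc

private lemma shift_inv_apply {R : Type*} [CommRing R] (T : R ≃+* R) (j : ℤ) (x : R) :
    (T ^ j) ((T ^ (-j)) x) = x := by
  have h : (T ^ j * T ^ (-j)) x = (T ^ j) ((T ^ (-j)) x) := rfl
  rw [← h, zpow_neg, mul_inv_cancel]; rfl

theorem residue_of_commutator_in_image_of_shift_minus_one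
    {R : Type*} [CommRing R] (T : R ≃+* R) :
    (∀ (j : ℤ) (a b : R),
      tmul T (Finsupp.single j a) (Finsupp.single (-j) b)
        - tmul T (Finsupp.single (-j) b) (Finsupp.single j a)
        = Finsupp.single 0 ((T ^ j) ((T ^ (-j)) a * b) - (T ^ (-j)) a * b)) ∧
    (∀ A B : ℤ →₀ R, ∃ c : R,
      (tmul T A B - tmul T B A) 0 = T c - c) := by
  constructor
  · intro j a b
    unfold tmul
    rw [Finsupp.sum_single_index (by simp), Finsupp.sum_single_index (by simp),
        Finsupp.sum_single_index (by simp), Finsupp.sum_single_index (by simp),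
        add_neg_cancel, neg_add_cancel, ← Finsupp.single_sub]
    congr 1
    rw [map_mul, shift_inv_apply T j a]
    ring
  · intro A B
    have hmem : (tmul T A B - tmul T B A) 0 ∈ shiftSub T := by
      unfold tmul
      rw [Finsupp.sum_comm B A (fun i b j a => Finsupp.single (i + j) (b * (T ^ i) a))]
      rw [Finsupp.sub_apply, Finsupp.sum_apply, Finsupp.sum_apply,
          Finsupp.sum, Finsupp.sum, ← Finset.sum_sub_distrib]
      apply AddSubgroup.sum_mem
      intro i _
      rw [Finsupp.sum_apply, Finsupp.sum_apply, Finsupp.sum, Finsupp.sum,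
          ← Finset.sum_sub_distrib]
      apply AddSubgroup.sum_mem
      intro j _
      by_cases h : i + j = 0
      · have hj : j = -i := by omega
        subst hj
        rw [Finsupp.single_apply, Finsupp.single_apply, if_pos h,
            if_pos (show -i + i = 0 by omega)]
        have : A i * (T ^ i) (B (-i)) - B (-i) * (T ^ (-i)) (A i)
            = (T ^ i) ((T ^ (-i)) (A i) * B (-i)) - (T ^ (-i)) (A i) * B (-i) := by
          rw [map_mul, shift_inv_apply T i (A i)]; ring
        rw [this]
        exact shift_pow_mem T i _
      · rw [Finsupp.single_apply, Finsupp.single_apply,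
            if_neg (by omega : ¬ i + j = 0), if_neg (by omega : ¬ j + i = 0)]
        simpa using (shiftSub T).zero_mem
    obtain ⟨c, hc⟩ := hmem
    exact ⟨c, hc.symm⟩
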